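/- Let G1 and G2 be nonempty graphs. The Cartesian product G1 □ G2 is regular and K3-regular (all vertices have the same degree and the same triangle-degree) if and only if both G1 and G2 are regular and K3-regular. -/

import Mathlib

open SimpleGraph Finset

/-- The K3-degree of a vertex: the number of triangles (3-cliques) of `G` containing `v`. -/
noncomputable def K3deg {V : Type*} (G : SimpleGraph V) (v : V) : ℕ :=
  {t : Finset V | G.IsNClique 3 t ∧ v ∈ t}.ncard

/-- The degree of a vertex, as the cardinality of its open neighbourhood. -/
noncomputable def deg {V : Type*} (G : SimpleGraph V) (v : V) : ℕ :=
  (G.neighborSet v).ncard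

/-- `G` has parameters `(r2, r3)`: every vertex has degree `r2` and K3-degree `r3`. -/
def HasParams {V : Type*} (G : SimpleGraph V) (r2 r3 : ℕ) : Prop :=
  ∀ v : V, deg G v = r2 ∧ K3deg G v = r3

lemma add_const_iff {α β : Type*} [Nonempty α] [Nonempty β] (f : α → ℕ) (g : β → ℕ) :
    (∃ r, ∀ p : α × β, f p.1 + g p.2 = r) ↔ (∃ r, ∀ a, f a = r) ∧ (∃ s, ∀ b, g b = s) := by
  constructor
  · rintro ⟨r, h⟩
    obtain ⟨a0⟩ := ‹Nonempty α›; obtain ⟨b0⟩ := ‹Nonempty β›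
    refine ⟨⟨f a0, fun a => ?_⟩, ⟨g b0, fun b => ?_⟩⟩
    · have h1 := h (a, b0); have h2 := h (a0, b0); simp only at h1 h2; omega
    · have h1 := h (a0, b); have h2 := h (a0, b0); simp only at h1 h2; omega
  · rintro ⟨⟨r, hr⟩, ⟨s, hs⟩⟩
    exact ⟨r + s, fun p => by rw [hr, hs]⟩

lemma deg_eq_degree {V : Type*} [Fintype V] (G : SimpleGraph V) [DecidableRel G.Adj] (v : V) :
    deg G v = G.degree v := by
  rw [deg, ← SimpleGraph.card_neighborSet_eq_degree, Set.ncard_eq_toFinset_card',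
    Set.toFinset_card]

lemma deg_boxProd {V1 V2 : Type*} [Fintype V1] [Fintype V2]
    (G1 : SimpleGraph V1) (G2 : SimpleGraph V2) (x : V1 × V2) :
    deg (G1.boxProd G2) x = deg G1 x.1 + deg G2 x.2 := by
  classical
  rw [deg_eq_degree, deg_eq_degree, deg_eq_degree]
  convert SimpleGraph.degree_boxProd x using 2

lemma triangle_fiber {V1 V2 : Type*} {G1 : SimpleGraph V1} {G2 : SimpleGraph V2}
    {t : Finset (V1 × V2)} (ht : (G1.boxProd G2).IsNClique 3 t) :
    (∀ x ∈ t, ∀ y ∈ t, x.2 = y.2) ∨ (∀ x ∈ t, ∀ y ∈ t, x.1 = y.1) := by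
  classical
  obtain ⟨x, hx, y, hy, hxy⟩ := Finset.one_lt_card.mp (by rw [ht.2]; norm_num)
  have hadj : (G1.boxProd G2).Adj x y := ht.1 hx hy hxy
  rw [SimpleGraph.boxProd_adj] at hadj
  -- helper: if x~y via first-coord adjacency, all second coords equal x.2
  have key : ∀ (x y : V1 × V2), x ∈ t → y ∈ t → G1.Adj x.1 y.1 → x.2 = y.2 →
      ∀ z ∈ t, z.2 = x.2 := by
    intro x y hx hy hA hE z hz
    by_cases hzx : z = x
    · rw [hzx]
    by_cases hzy : z = y
    · rw [hzy, ← hE]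
    have h1 := ht.1 hz hx hzx
    have h2 := ht.1 hz hy hzy
    rw [SimpleGraph.boxProd_adj] at h1 h2
    rcases h1 with ⟨_, h1e⟩ | ⟨h1a, h1e⟩
    · exact h1e
    rcases h2 with ⟨_, h2e⟩ | ⟨h2a, h2e⟩
    · exact h2e.trans hE.symm
    · exact absurd hA (h1e ▸ h2e ▸ G1.irrefl)
  have key2 : ∀ (x y : V1 × V2), x ∈ t → y ∈ t → G2.Adj x.2 y.2 → x.1 = y.1 →
      ∀ z ∈ t, z.1 = x.1 := by
    intro x y hx hy hA hE z hz
    by_cases hzx : z = x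
    · rw [hzx]
    by_cases hzy : z = y
    · rw [hzy, ← hE]
    have h1 := ht.1 hz hx hzx
    have h2 := ht.1 hz hy hzy
    rw [SimpleGraph.boxProd_adj] at h1 h2
    rcases h1 with ⟨h1a, h1e⟩ | ⟨_, h1e⟩
    · rcases h2 with ⟨h2a, h2e⟩ | ⟨_, h2e⟩
      · exact absurd hA (h1e ▸ h2e ▸ G2.irrefl)
      · exact h2e.trans hE.symm
    · exact h1e
  rcases hadj with ⟨hA, hE⟩ | ⟨hA, hE⟩
  · left
    intro a ha b hb
    rw [key x y hx hy hA hE a ha, key x y hx hy hA hE b hb]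
  · right
    intro a ha b hb
    rw [key2 x y hx hy hA hE a ha, key2 x y hx hy hA hE b hb]

set_option maxHeartbeats 1000000 in
lemma K3deg_boxProd {V1 V2 : Type*} [Fintype V1] [Fintype V2]
    (G1 : SimpleGraph V1) (G2 : SimpleGraph V2) (x : V1 × V2) :
    K3deg (G1.boxProd G2) x = K3deg G1 x.1 + K3deg G2 x.2 := by
  classical
  obtain ⟨u, v⟩ := x
  simp only [K3deg]
  set S : Set (Finset (V1 × V2)) :=
    {t | (G1.boxProd G2).IsNClique 3 t ∧ (u, v) ∈ t}
  set T1 : Set (Finset V1) := {s | G1.IsNClique 3 s ∧ u ∈ s}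
  set T2 : Set (Finset V2) := {s | G2.IsNClique 3 s ∧ v ∈ s}
  have hf1inj : Function.Injective (fun a : V1 => (a, v)) := fun a b h => (Prod.mk.injEq ..).mp h |>.1
  have hf2inj : Function.Injective (fun b : V2 => (u, b)) := fun a b h => (Prod.mk.injEq ..).mp h |>.2
  set f1 : Finset V1 → Finset (V1 × V2) := fun s => s.image (fun a => (a, v))
  set f2 : Finset V2 → Finset (V1 × V2) := fun s => s.image (fun b => (u, b))
  have hS : S = f1 '' T1 ∪ f2 '' T2 := by
    ext t
    constructor
    · rintro ⟨ht, huv⟩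
      rcases triangle_fiber ht with hfib | hfib
      · left
        refine ⟨t.image Prod.fst, ⟨⟨?_, ?_⟩, ?_⟩, ?_⟩
        · intro a ha b hb hab
          simp only [Finset.mem_coe, Finset.mem_image] at ha hb
          obtain ⟨p, hp, rfl⟩ := ha
          obtain ⟨q, hq, rfl⟩ := hb
          have hpq : p ≠ q := fun h => hab (by rw [h])
          have := ht.1 hp hq hpq
          rw [SimpleGraph.boxProd_adj] at this
          rcases this with ⟨hA, _⟩ | ⟨_, hE⟩
          · exact hA
          · exact absurd hE hab
        · rw [Finset.card_image_of_injOn, ht.2]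
          intro p hp q hq h
          exact Prod.ext h ((hfib p hp q hq))
        · exact Finset.mem_image.mpr ⟨(u, v), huv, rfl⟩
        · simp only [f1]
          rw [Finset.image_image]
          ext p
          simp only [Finset.mem_image, Function.comp]
          constructor
          · rintro ⟨q, hq, rfl⟩
            have : q.2 = v := hfib q hq (u, v) huv
            simpa [← this]
          · intro hp
            exact ⟨p, hp, Prod.ext rfl (hfib p hp (u, v) huv).symm⟩
      · right
        refine ⟨t.image Prod.snd, ⟨⟨?_, ?_⟩, ?_⟩, ?_⟩
        · intro a ha b hb hab
          simp only [Finset.mem_coe, Finset.mem_image] at ha hb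
          obtain ⟨p, hp, rfl⟩ := ha
          obtain ⟨q, hq, rfl⟩ := hb
          have hpq : p ≠ q := fun h => hab (by rw [h])
          have := ht.1 hp hq hpq
          rw [SimpleGraph.boxProd_adj] at this
          rcases this with ⟨_, hE⟩ | ⟨hA, _⟩
          · exact absurd hE hab
          · exact hA
        · rw [Finset.card_image_of_injOn, ht.2]
          intro p hp q hq h
          exact Prod.ext (hfib p hp q hq) h
        · exact Finset.mem_image.mpr ⟨(u, v), huv, rfl⟩
        · simp only [f2]
          rw [Finset.image_image]
          ext p
          simp only [Finset.mem_image, Function.comp]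
          constructor
          · rintro ⟨q, hq, rfl⟩
            have : q.1 = u := hfib q hq (u, v) huv
            simpa [← this]
          · intro hp
            exact ⟨p, hp, Prod.ext (hfib p hp (u, v) huv).symm rfl⟩
    · rintro (⟨s, ⟨hs, hus⟩, rfl⟩ | ⟨s, ⟨hs, hvs⟩, rfl⟩)
      · refine ⟨⟨?_, ?_⟩, Finset.mem_image.mpr ⟨u, hus, rfl⟩⟩
        · intro p hp q hq hpq
          simp only [f1, Finset.coe_image, Set.mem_image, Finset.mem_coe] at hp hq
          obtain ⟨a, ha, rfl⟩ := hp
          obtain ⟨b, hb, rfl⟩ := hq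
          have hab : a ≠ b := fun h => hpq (by rw [h])
          exact SimpleGraph.boxProd_adj_left.mpr (hs.1 ha hb hab)
        · rw [Finset.card_image_of_injective _ hf1inj, hs.2]
      · refine ⟨⟨?_, ?_⟩, Finset.mem_image.mpr ⟨v, hvs, rfl⟩⟩
        · intro p hp q hq hpq
          simp only [f2, Finset.coe_image, Set.mem_image, Finset.mem_coe] at hp hq
          obtain ⟨a, ha, rfl⟩ := hp
          obtain ⟨b, hb, rfl⟩ := hq
          have hab : a ≠ b := fun h => hpq (by rw [h])
          exact SimpleGraph.boxProd_adj_right.mpr (hs.1 ha hb hab)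
        · rw [Finset.card_image_of_injective _ hf2inj, hs.2]
  have hdisj : Disjoint (f1 '' T1) (f2 '' T2) := by
    rw [Set.disjoint_left]
    rintro t ⟨s1, ⟨hs1, hus1⟩, rfl⟩ ⟨s2, ⟨hs2, hvs2⟩, heq⟩
    -- f2 s2 = f1 s1 : all elements have first coord u and second coord v, so card ≤ 1
    have hsub : f1 s1 ⊆ {(u, v)} := by
      intro p hp
      have hp2 : p ∈ f2 s2 := by rw [heq]; exact hp
      simp only [f1, Finset.mem_image] at hp
      obtain ⟨a, ha, rfl⟩ := hp
      simp only [f2, Finset.mem_image] at hp2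
      obtain ⟨b, hb, hpe⟩ := hp2
      have h1 : u = a := congrArg Prod.fst hpe
      rw [← h1]
      exact Finset.mem_singleton_self _
    have hcard : (f1 s1).card = 3 := by
      rw [Finset.card_image_of_injective _ hf1inj, hs1.2]
    have := Finset.card_le_card hsub
    rw [hcard, Finset.card_singleton] at this
    omega
  have hfin1 : (f1 '' T1).Finite := Set.toFinite _
  have hfin2 : (f2 '' T2).Finite := Set.toFinite _
  rw [hS, Set.ncard_union_eq hdisj hfin1 hfin2,
    Set.ncard_image_of_injective _ (Finset.image_injective hf1inj),
    Set.ncard_image_of_injective _ (Finset.image_injective hf2inj)]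

set_option maxHeartbeats 1000000 in
theorem stmt9 {V1 V2 : Type*} [Fintype V1] [Fintype V2] [Nonempty V1] [Nonempty V2]
    (G1 : SimpleGraph V1) (G2 : SimpleGraph V2) :
    ((∃ r, ∀ v, deg (G1.boxProd G2) v = r) ∧ (∃ s, ∀ v, K3deg (G1.boxProd G2) v = s)) ↔
      (((∃ r, ∀ v, deg G1 v = r) ∧ (∃ s, ∀ v, K3deg G1 v = s)) ∧
        ((∃ r, ∀ v, deg G2 v = r) ∧ (∃ s, ∀ v, K3deg G2 v = s))) := by
  have hd : ∀ x : V1 × V2, deg (G1.boxProd G2) x = deg G1 x.1 + deg G2 x.2 :=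
    deg_boxProd G1 G2
  have hk : ∀ x : V1 × V2, K3deg (G1.boxProd G2) x = K3deg G1 x.1 + K3deg G2 x.2 :=
    K3deg_boxProd G1 G2
  have e1 : (∃ r, ∀ v, deg (G1.boxProd G2) v = r) ↔
      (∃ r, ∀ v, deg G1 v = r) ∧ (∃ s, ∀ v, deg G2 v = s) := by
    rw [← add_const_iff (deg G1) (deg G2)]
    exact ⟨fun ⟨r, h⟩ => ⟨r, fun p => (hd p) ▸ h p⟩, fun ⟨r, h⟩ => ⟨r, fun p => (hd p).trans (h p)⟩⟩
  have e2 : (∃ s, ∀ v, K3deg (G1.boxProd G2) v = s) ↔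
      (∃ r, ∀ v, K3deg G1 v = r) ∧ (∃ s, ∀ v, K3deg G2 v = s) := by
    rw [← add_const_iff (K3deg G1) (K3deg G2)]
    exact ⟨fun ⟨r, h⟩ => ⟨r, fun p => (hk p) ▸ h p⟩, fun ⟨r, h⟩ => ⟨r, fun p => (hk p).trans (h p)⟩⟩
  rw [e1, e2]
  tauto
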